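/- Let I be an ideal on ω containing all finite sets, and let α be a countable ordinal. If f : ω → ω^α is a function with f⁻¹(ξ) ∈ I for each ξ < ω^α, then for every B ⊆ ω with B ∉ I there exists a strictly increasing sequence (λ_n) in ω^α such that B ∩ f⁻¹[[λ_n, λ_{n+1})] ∈ I for each n and B ∩ f⁻¹[[λ_0, λ)] ∉ I, where λ = sup_n λ_n. -/

import Mathlib

open Set Filter Topology Ordinal

noncomputable section

/-- The derived set of `A`: the set of accumulation (limit) points of `A`. -/
def derivSet {X : Type*} [TopologicalSpace X] (A : Set X) : Set X :=
  {p | p ∈ closure (A \ {p})}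

/-- The ordinal space `ω^a + 1 = [0, ω^a]` with the (order) topology. -/
abbrev OrdSpace (a : Ordinal) : Type _ := ↥(Set.Iic (omega0 ^ a))

/-- The ideal `conv_a` on `ω^a + 1`: sets with finite derived set. -/
def convIdeal (a : Ordinal) : Set (Set (OrdSpace a)) :=
  {A | (derivSet A).Finite}

/-- `I` is an ideal of subsets. -/
structure IsIdeal {S : Type*} (I : Set (Set S)) : Prop where
  empty_mem : ∅ ∈ I
  subset_mem : ∀ {A B : Set S}, A ⊆ B → B ∈ I → A ∈ I
  union_mem : ∀ {A B : Set S}, A ∈ I → B ∈ I → A ∪ B ∈ I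

/-- The subsequence of `f` indexed by `A` converges to `x`. -/
def ConvAlong {X : Type*} [TopologicalSpace X] (f : ℕ → X) (A : Set ℕ) (x : X) : Prop :=
  ∀ U ∈ nhds x, {n ∈ A | f n ∉ U}.Finite

/-- Katětov order: `J ≤_K I`, where `I` lives on `X` and `J` on `Y`. -/
def KatetovLE {X Y : Type*} (J : Set (Set Y)) (I : Set (Set X)) : Prop :=
  ∃ f : X → Y, ∀ A ∈ J, f ⁻¹' A ∈ I

/-- `X ∈ FinBW(I)`: every sequence in `X` has a convergent subsequence indexed
by an `I`-positive set. -/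
def InFinBW (I : Set (Set ℕ)) (X : Type*) [TopologicalSpace X] : Prop :=
  ∀ f : ℕ → X, ∃ A : Set ℕ, A ∉ I ∧ ∃ x : X, ConvAlong f A x

universe u

private lemma opow_card_le (a : Ordinal.{u}) (hac : a.card ≤ Cardinal.aleph0) :
    (omega0 ^ a).card ≤ Cardinal.aleph0 := by
  induction a using Ordinal.limitRecOn.{0, u} with
  | zero =>
    rw [opow_zero]
    simpa using Cardinal.one_le_aleph0
  | add_one a IH =>
    rw [Ordinal.card_add_one] at hac
    have ha : a.card ≤ Cardinal.aleph0 := le_trans (self_le_add_right _ _) hac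
    rw [opow_add_one, Ordinal.card_mul, Ordinal.card_omega0]
    calc (omega0 ^ a).card * Cardinal.aleph0
        ≤ Cardinal.aleph0 * Cardinal.aleph0 :=
          mul_le_mul' (IH ha) le_rfl
      _ = Cardinal.aleph0 := Cardinal.aleph0_mul_aleph0
  | limit a ha IH =>
    have key : omega0 ^ a < (Cardinal.aleph 1).ord := by
      rw [← Ordinal.IsNormal.bsup_eq.{u,u} (isNormal_opow one_lt_omega0) ha]
      refine Ordinal.bsup_lt_ord ?_ ?_
      · rw [Cardinal.isRegular_aleph_one.cof_eq]
        exact hac.trans_lt Cardinal.aleph0_lt_aleph_one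
      · intro i hi
        rw [Cardinal.lt_ord, ← Cardinal.succ_aleph0, Order.lt_succ_iff]
        exact IH i hi ((Ordinal.card_le_card hi.le).trans hac)
    rw [Cardinal.lt_ord, ← Cardinal.succ_aleph0, Order.lt_succ_iff] at key
    exact key

theorem stmt8 (I : Set (Set ℕ)) (hI : IsIdeal I)
    (hIFin : ∀ F : Set ℕ, F.Finite → F ∈ I)
    (a : Ordinal) (hac : a.card ≤ Cardinal.aleph0)
    (f : ℕ → Ordinal) (hf : ∀ n, f n < omega0 ^ a)
    (hfib : ∀ ξ : Ordinal, ξ < omega0 ^ a → f ⁻¹' {ξ} ∈ I)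
    (B : Set ℕ) (hB : B ∉ I) :
    ∃ l : ℕ → Ordinal, StrictMono l ∧ (∀ n, l n < omega0 ^ a) ∧
      (∀ n, B ∩ f ⁻¹' (Set.Ico (l n) (l (n + 1))) ∈ I) ∧
      B ∩ f ⁻¹' (Set.Ico (l 0) (⨆ n, l n)) ∉ I := by
  -- every fiber is in I (even for γ ≥ ω^a, where the fiber is empty)
  have hfib' : ∀ γ : Ordinal, f ⁻¹' {γ} ∈ I := by
    intro γ
    by_cases h : γ < omega0 ^ a
    · exact hfib γ h
    · have : f ⁻¹' {γ} = ∅ := by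
        ext n
        simp only [Set.mem_preimage, Set.mem_singleton_iff, Set.mem_empty_iff_false, iff_false]
        exact fun hn => h (hn ▸ hf n)
      rw [this]; exact hI.empty_mem
  -- the least δ such that B ∩ f⁻¹[0, δ) ∉ I
  set S : Set Ordinal := {β | B ∩ f ⁻¹' (Set.Iio β) ∉ I} with hS
  have hSne : (omega0 ^ a) ∈ S := by
    have hu : f ⁻¹' (Set.Iio (omega0 ^ a)) = Set.univ :=
      Set.eq_univ_of_forall fun n => hf n
    simpa [hS, hu] using hB
  set δ := sInf S with hδ
  have hδS : δ ∈ S := csInf_mem ⟨_, hSne⟩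
  have hδle : δ ≤ omega0 ^ a := csInf_le' hSne
  have hlt : ∀ β < δ, B ∩ f ⁻¹' (Set.Iio β) ∈ I := by
    intro β hβ
    by_contra hc
    exact absurd hβ (not_lt.2 (csInf_le' hc))
  have hδ0 : δ ≠ 0 := by
    intro h
    apply hδS
    rw [h]
    have : (Set.Iio (0 : Ordinal)) = ∅ := by ext x; simp
    rw [this]
    simpa using hI.empty_mem
  have hδnotsucc : ∀ γ, δ ≠ Order.succ γ := by
    intro γ h
    apply hδS
    have hsub : B ∩ f ⁻¹' (Set.Iio δ) ⊆ (B ∩ f ⁻¹' (Set.Iio γ)) ∪ f ⁻¹' {γ} := by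
      intro n hn
      rcases hn with ⟨hnB, hnf⟩
      simp only [Set.mem_preimage, Set.mem_Iio, h, Order.lt_succ_iff] at hnf
      rcases lt_or_eq_of_le hnf with h' | h'
      · exact Or.inl ⟨hnB, h'⟩
      · exact Or.inr h'
    have hγδ : γ < δ := h ▸ Order.lt_succ γ
    exact hI.subset_mem hsub (hI.union_mem (hlt γ hγδ) (hfib' γ))
  have hδlim : Order.IsSuccLimit δ := by
    rcases Ordinal.zero_or_succ_or_isSuccLimit δ with h | ⟨γ, h⟩ | h
    · exact absurd h hδ0
    · exact absurd h.symm (hδnotsucc γ)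
    · exact h
  -- δ is countable, so Iio δ has a surjective enumeration
  have hcount : Countable (Set.Iio δ) := by
    rw [← Cardinal.mk_le_aleph0_iff, Ordinal.mk_Iio_ordinal]
    have h1 : δ.card ≤ Cardinal.aleph0 :=
      (Ordinal.card_le_card hδle).trans (opow_card_le a hac)
    calc Cardinal.lift δ.card ≤ Cardinal.lift Cardinal.aleph0 := Cardinal.lift_le.2 h1
      _ = Cardinal.aleph0 := Cardinal.lift_aleph0
  have hne : Nonempty (Set.Iio δ) := ⟨⟨0, pos_iff_ne_zero.2 hδ0⟩⟩
  obtain ⟨e, he⟩ := exists_surjective_nat (Set.Iio δ)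
  -- Build the strictly increasing sequence
  set l : ℕ → Ordinal := fun n => Nat.rec (e 0 : Ordinal) (fun n ih => max (ih + 1) (e (n + 1))) n
    with hl
  have hl0 : l 0 = e 0 := rfl
  have hlsucc : ∀ n, l (n + 1) = max (l n + 1) (e (n + 1)) := fun n => rfl
  have hmono : StrictMono l := by
    apply strictMono_nat_of_lt_succ
    intro n
    rw [hlsucc]
    exact lt_of_lt_of_le (Order.lt_succ (l n)) (le_max_left _ _)
  have hlδ : ∀ n, l n < δ := by
    intro n
    induction n with
    | zero => exact (e 0).2
    | succ n ih =>
      rw [hlsucc]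
      exact max_lt (hδlim.succ_lt ih) (e (n + 1)).2
  have hel : ∀ n, (e n : Ordinal) ≤ l n := by
    intro n
    cases n with
    | zero => exact le_rfl
    | succ n => rw [hlsucc]; exact le_max_right _ _
  have hsup : (⨆ n, l n) = δ := by
    apply le_antisymm
    · exact ciSup_le' fun n => (hlδ n).le
    · refine le_of_forall_lt fun β hβ => ?_
      obtain ⟨n, hn⟩ := he ⟨β, hβ⟩
      calc β = (e n : Ordinal) := by rw [hn]
        _ ≤ l n := hel n
        _ < l (n + 1) := hmono (Nat.lt_succ_self n)
        _ ≤ ⨆ n, l n := Ordinal.le_iSup l (n + 1)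
  refine ⟨l, hmono, fun n => lt_of_lt_of_le (hlδ n) hδle, ?_, ?_⟩
  · intro n
    refine hI.subset_mem ?_ (hlt (l (n + 1)) (hlδ (n + 1)))
    exact Set.inter_subset_inter_right B (Set.preimage_mono fun x hx => hx.2)
  · rw [hsup]
    intro hc
    apply hδS
    have hsub : B ∩ f ⁻¹' (Set.Iio δ) ⊆
        (B ∩ f ⁻¹' (Set.Iio (l 0))) ∪ (B ∩ f ⁻¹' (Set.Ico (l 0) δ)) := by
      intro n hn
      rcases hn with ⟨hnB, hnf⟩
      rcases lt_or_ge (f n) (l 0) with h' | h'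
      · exact Or.inl ⟨hnB, h'⟩
      · exact Or.inr ⟨hnB, h', hnf⟩
    exact hI.subset_mem hsub (hI.union_mem (hlt (l 0) (hlδ 0)) hc)
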